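/- Consider a commutative cube in Graph whose top and bottom squares are pushouts of inclusions (L_0 ↪ I_0 pushed out along μ_0: L_0 → S_0 giving D_0, and L_i ↪ I_i pushed out along μ_i: L_i → S_{f(i)} giving D_{f(i)}), and whose left and back squares are pullbacks, with all vertical-chain morphisms inclusions. Then the unique mediating morphism D_{f(i)} → D_0 induced by the universal property of the bottom pushout makes the front and right squares pullbacks, and this mediating morphism is itself an inclusion, namely the sum of the inclusions S_{f(i)} ↪ S_0 and (I_i \ L_i) ↪ (I_0 \ L_0). -/

import Mathlib

/-- A directed multigraph. -/
structure MGraph where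
  N : Type
  A : Type
  src : A → N
  tgt : A → N

/-- A (total) graph homomorphism. -/
structure GraphHom (G H : MGraph) where
  fN : G.N → H.N
  fA : G.A → H.A
  src_comm : ∀ a, H.src (fA a) = fN (G.src a)
  tgt_comm : ∀ a, H.tgt (fA a) = fN (G.tgt a)

/-- A subgraph, given by node and arrow sets closed under source and target. -/
structure Subgraph (G : MGraph) where
  nodes : Set G.N
  arrows : Set G.A
  src_mem : ∀ a ∈ arrows, G.src a ∈ nodes
  tgt_mem : ∀ a ∈ arrows, G.tgt a ∈ nodes

/-- The graph realizing a subgraph. -/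
def Subgraph.toGraph {G : MGraph} (X : Subgraph G) : MGraph where
  N := {x // x ∈ X.nodes}
  A := {a // a ∈ X.arrows}
  src := fun a => ⟨G.src a.1, X.src_mem a.1 a.2⟩
  tgt := fun a => ⟨G.tgt a.1, X.tgt_mem a.1 a.2⟩

/-- Subgraph inclusion order. -/
def Subgraph.le {G : MGraph} (X Y : Subgraph G) : Prop :=
  X.nodes ⊆ Y.nodes ∧ X.arrows ⊆ Y.arrows

/-- Intersection of subgraphs. -/
def Subgraph.inter {G : MGraph} (X Y : Subgraph G) : Subgraph G where
  nodes := X.nodes ∩ Y.nodes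
  arrows := X.arrows ∩ Y.arrows
  src_mem := fun a ha => ⟨X.src_mem a ha.1, Y.src_mem a ha.2⟩
  tgt_mem := fun a ha => ⟨X.tgt_mem a ha.1, Y.tgt_mem a ha.2⟩

/-- The full subgraph. -/
def Subgraph.top (G : MGraph) : Subgraph G :=
  ⟨Set.univ, Set.univ, fun _ _ => trivial, fun _ _ => trivial⟩

/-- A partial graph homomorphism `G ⇀ H`: a subgraph `dom ⊑ G` (the domain of
definition) together with a total graph homomorphism `dom → H`. -/
structure PGraphHom (G H : MGraph) where
  dom : Subgraph G
  fN : ∀ x, x ∈ dom.nodes → H.N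
  fA : ∀ a, a ∈ dom.arrows → H.A
  src_comm : ∀ a (ha : a ∈ dom.arrows),
    H.src (fA a ha) = fN (G.src a) (dom.src_mem a ha)
  tgt_comm : ∀ a (ha : a ∈ dom.arrows),
    H.tgt (fA a ha) = fN (G.tgt a) (dom.tgt_mem a ha)

/-- A partial graph homomorphism is total if its domain of definition is everything. -/
def PGraphHom.Total {G H : MGraph} (φ : PGraphHom G H) : Prop :=
  φ.dom.nodes = Set.univ ∧ φ.dom.arrows = Set.univ

theorem PGraphHom.fN_congr {G H : MGraph} (φ : PGraphHom G H) {x y : G.N}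
    (hx : x ∈ φ.dom.nodes) (hy : y ∈ φ.dom.nodes) (h : x = y) :
    φ.fN x hx = φ.fN y hy := by subst h; rfl

/-- Domain of definition of the composite: the preimage of `dom ψ` under `φ`. -/
def PGraphHom.domComp {G H K : MGraph} (φ : PGraphHom G H) (ψ : PGraphHom H K) :
    Subgraph G where
  nodes := {x | ∃ h : x ∈ φ.dom.nodes, φ.fN x h ∈ ψ.dom.nodes}
  arrows := {a | ∃ h : a ∈ φ.dom.arrows, φ.fA a h ∈ ψ.dom.arrows}
  src_mem := fun a ha => ⟨φ.dom.src_mem a ha.choose, by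
    rw [← φ.src_comm a ha.choose]
    exact ψ.dom.src_mem _ ha.choose_spec⟩
  tgt_mem := fun a ha => ⟨φ.dom.tgt_mem a ha.choose, by
    rw [← φ.tgt_comm a ha.choose]
    exact ψ.dom.tgt_mem _ ha.choose_spec⟩

/-- Composition of partial graph homomorphisms. -/
def PGraphHom.comp {G H K : MGraph} (φ : PGraphHom G H) (ψ : PGraphHom H K) :
    PGraphHom G K where
  dom := φ.domComp ψ
  fN := fun x hx => ψ.fN (φ.fN x hx.choose) hx.choose_spec
  fA := fun a ha => ψ.fA (φ.fA a ha.choose) ha.choose_spec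
  src_comm := fun a ha =>
    (ψ.src_comm _ ha.choose_spec).trans
      (ψ.fN_congr _ _ (φ.src_comm a ha.choose))
  tgt_comm := fun a ha =>
    (ψ.tgt_comm _ ha.choose_spec).trans
      (ψ.fN_congr _ _ (φ.tgt_comm a ha.choose))

/-- The order `φ ⪯ ψ`: `dom φ ⊑ dom ψ` and agreement on `dom φ`. -/
def PGraphHom.le {G H : MGraph} (φ ψ : PGraphHom G H) : Prop :=
  φ.dom.le ψ.dom ∧
  (∀ x (hx : x ∈ φ.dom.nodes) (hx' : x ∈ ψ.dom.nodes), φ.fN x hx = ψ.fN x hx') ∧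
  (∀ a (ha : a ∈ φ.dom.arrows) (ha' : a ∈ ψ.dom.arrows), φ.fA a ha = ψ.fA a ha')

/-- Regarding a total graph homomorphism as a partial one. -/
def GraphHom.toP {G H : MGraph} (f : GraphHom G H) : PGraphHom G H where
  dom := Subgraph.top G
  fN := fun x _ => f.fN x
  fA := fun a _ => f.fA a
  src_comm := fun a _ => f.src_comm a
  tgt_comm := fun a _ => f.tgt_comm a

/-- Composition of total graph homomorphisms. -/
def GraphHom.comp {G H K : MGraph} (f : GraphHom G H) (g : GraphHom H K) :
    GraphHom G K where
  fN := fun x => g.fN (f.fN x)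
  fA := fun a => g.fA (f.fA a)
  src_comm := fun a => (g.src_comm _).trans (congrArg g.fN (f.src_comm a))
  tgt_comm := fun a => (g.tgt_comm _).trans (congrArg g.fN (f.tgt_comm a))

noncomputable section PushoutConstruction

attribute [local instance] Classical.propDecidable

variable (H : MGraph) (Gsub : Subgraph H) (K : MGraph)
variable (ψ : GraphHom (Subgraph.toGraph Gsub) K)

/-- Nodes of the pushout `P = K + (H \ G)`. -/
def pushNodes := K.N ⊕ {x : H.N // x ∉ Gsub.nodes}

/-- Arrows of the pushout `P = K + (H \ G)`. -/
def pushArrows := K.A ⊕ {a : H.A // a ∉ Gsub.arrows}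

/-- The node map of `ψ* = ψ + id_{H∖G} : H → P`. -/
def pushMapN (x : H.N) : pushNodes H Gsub K :=
  if h : x ∈ Gsub.nodes then Sum.inl (ψ.fN ⟨x, h⟩) else Sum.inr ⟨x, h⟩

/-- The arrow map of `ψ* = ψ + id_{H∖G} : H → P`. -/
def pushMapA (a : H.A) : pushArrows H Gsub K :=
  if h : a ∈ Gsub.arrows then Sum.inl (ψ.fA ⟨a, h⟩) else Sum.inr ⟨a, h⟩

/-- The pushout graph `P = K + (H \ G)`, with sources and targets as in the
explicit construction. -/
def Push : MGraph where
  N := pushNodes H Gsub K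
  A := pushArrows H Gsub K
  src := fun a => match a with
    | Sum.inl e => Sum.inl (K.src e)
    | Sum.inr a => pushMapN H Gsub K ψ (H.src a.1)
  tgt := fun a => match a with
    | Sum.inl e => Sum.inl (K.tgt e)
    | Sum.inr a => pushMapN H Gsub K ψ (H.tgt a.1)

/-- The inclusion `φ* : K ↪ P`. -/
def pushInl : GraphHom K (Push H Gsub K ψ) where
  fN := Sum.inl
  fA := Sum.inl
  src_comm := fun _ => rfl
  tgt_comm := fun _ => rfl

/-- The homomorphism `ψ* : H → P`, given by `ψ` on `G` and the identity on `H ∖ G`. -/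
def pushMap : GraphHom H (Push H Gsub K ψ) where
  fN := pushMapN H Gsub K ψ
  fA := pushMapA H Gsub K ψ
  src_comm := fun a => by
    unfold pushMapA
    by_cases h : a ∈ Gsub.arrows
    · erw [dif_pos h]
      have hs : H.src a ∈ Gsub.nodes := Gsub.src_mem a h
      unfold pushMapN
      erw [dif_pos hs]
      exact congrArg Sum.inl (ψ.src_comm ⟨a, h⟩)
    · erw [dif_neg h]
      rfl
  tgt_comm := fun a => by
    unfold pushMapA
    by_cases h : a ∈ Gsub.arrows
    · erw [dif_pos h]
      have hs : H.tgt a ∈ Gsub.nodes := Gsub.tgt_mem a h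
      unfold pushMapN
      erw [dif_pos hs]
      exact congrArg Sum.inl (ψ.tgt_comm ⟨a, h⟩)
    · erw [dif_neg h]
      rfl

/-- The inclusion graph homomorphism `G ↪ H`. -/
def subIncl : GraphHom (Subgraph.toGraph Gsub) H where
  fN := Subtype.val
  fA := Subtype.val
  src_comm := fun _ => rfl
  tgt_comm := fun _ => rfl

end PushoutConstruction

section Cube

variable (I0 : MGraph) (Lsub Ii : Subgraph I0) (S0 : MGraph)
variable (μ0 : GraphHom (Subgraph.toGraph Lsub) S0) (Sfi : Subgraph S0)

/-- The subgraph `L_i = L_0 ∩ I_i`, realized as a subgraph of `I_i`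
(the back square of the cube is a pullback). -/
def liftL : Subgraph (Subgraph.toGraph Ii) where
  nodes := {x | x.1 ∈ Lsub.nodes}
  arrows := {a | a.1 ∈ Lsub.arrows}
  src_mem := fun a ha => Lsub.src_mem a.1 ha
  tgt_mem := fun a ha => Lsub.tgt_mem a.1 ha

variable (hleftN : ∀ x (hx : x ∈ Lsub.nodes), x ∈ Ii.nodes ↔ μ0.fN ⟨x, hx⟩ ∈ Sfi.nodes)
variable (hleftA : ∀ a (ha : a ∈ Lsub.arrows), a ∈ Ii.arrows ↔ μ0.fA ⟨a, ha⟩ ∈ Sfi.arrows)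

/-- The restriction `μ_i : L_i → S_{f(i)}` of `μ_0` (the left square of the
cube is a pullback). -/
def μi : GraphHom (Subgraph.toGraph (liftL I0 Lsub Ii)) (Subgraph.toGraph Sfi) where
  fN := fun x => ⟨μ0.fN ⟨x.1.1, x.2⟩, (hleftN x.1.1 x.2).mp x.1.2⟩
  fA := fun a => ⟨μ0.fA ⟨a.1.1, a.2⟩, (hleftA a.1.1 a.2).mp a.1.2⟩
  src_comm := fun a => Subtype.ext (μ0.src_comm ⟨a.1.1, a.2⟩)
  tgt_comm := fun a => Subtype.ext (μ0.tgt_comm ⟨a.1.1, a.2⟩)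

theorem GraphHom.ext' {G H : MGraph} {f g : GraphHom G H}
    (hN : f.fN = g.fN) (hA : f.fA = g.fA) : f = g := by
  cases f; cases g; cases hN; cases hA; rfl

/-- The node map of the mediating morphism: sum of the two inclusions. -/
def medN : pushNodes (Subgraph.toGraph Ii) (liftL I0 Lsub Ii) (Subgraph.toGraph Sfi) →
    pushNodes I0 Lsub S0
  | Sum.inl s => Sum.inl s.1
  | Sum.inr x => Sum.inr ⟨x.1.1, x.2⟩

/-- The arrow map of the mediating morphism: sum of the two inclusions. -/
def medA : pushArrows (Subgraph.toGraph Ii) (liftL I0 Lsub Ii) (Subgraph.toGraph Sfi) →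
    pushArrows I0 Lsub S0
  | Sum.inl s => Sum.inl s.1
  | Sum.inr a => Sum.inr ⟨a.1.1, a.2⟩

theorem med_mapN (x : (Subgraph.toGraph Ii).N) :
    medN I0 Lsub Ii S0 Sfi
      (pushMapN (Subgraph.toGraph Ii) (liftL I0 Lsub Ii) (Subgraph.toGraph Sfi)
        (μi I0 Lsub Ii S0 μ0 Sfi hleftN hleftA) x) =
    pushMapN I0 Lsub S0 μ0 x.1 := by
  by_cases h : x.1 ∈ Lsub.nodes
  · rw [show pushMapN (Subgraph.toGraph Ii) (liftL I0 Lsub Ii) (Subgraph.toGraph Sfi)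
        (μi I0 Lsub Ii S0 μ0 Sfi hleftN hleftA) x =
        Sum.inl ((μi I0 Lsub Ii S0 μ0 Sfi hleftN hleftA).fN ⟨x, h⟩) from dif_pos h,
      show pushMapN I0 Lsub S0 μ0 x.1 = Sum.inl (μ0.fN ⟨x.1, h⟩) from dif_pos h]
    rfl
  · rw [show pushMapN (Subgraph.toGraph Ii) (liftL I0 Lsub Ii) (Subgraph.toGraph Sfi)
        (μi I0 Lsub Ii S0 μ0 Sfi hleftN hleftA) x = Sum.inr ⟨x, h⟩ from dif_neg h,
      show pushMapN I0 Lsub S0 μ0 x.1 = Sum.inr ⟨x.1, h⟩ from dif_neg h]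
    rfl

theorem med_mapA (a : (Subgraph.toGraph Ii).A) :
    medA I0 Lsub Ii S0 Sfi
      (pushMapA (Subgraph.toGraph Ii) (liftL I0 Lsub Ii) (Subgraph.toGraph Sfi)
        (μi I0 Lsub Ii S0 μ0 Sfi hleftN hleftA) a) =
    pushMapA I0 Lsub S0 μ0 a.1 := by
  by_cases h : a.1 ∈ Lsub.arrows
  · rw [show pushMapA (Subgraph.toGraph Ii) (liftL I0 Lsub Ii) (Subgraph.toGraph Sfi)
        (μi I0 Lsub Ii S0 μ0 Sfi hleftN hleftA) a =
        Sum.inl ((μi I0 Lsub Ii S0 μ0 Sfi hleftN hleftA).fA ⟨a, h⟩) from dif_pos h,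
      show pushMapA I0 Lsub S0 μ0 a.1 = Sum.inl (μ0.fA ⟨a.1, h⟩) from dif_pos h]
    rfl
  · rw [show pushMapA (Subgraph.toGraph Ii) (liftL I0 Lsub Ii) (Subgraph.toGraph Sfi)
        (μi I0 Lsub Ii S0 μ0 Sfi hleftN hleftA) a = Sum.inr ⟨a, h⟩ from dif_neg h,
      show pushMapA I0 Lsub S0 μ0 a.1 = Sum.inr ⟨a.1, h⟩ from dif_neg h]
    rfl

/-- The mediating morphism `D_{f(i)} → D_0`. -/
def medHom : GraphHom
    (Push (Subgraph.toGraph Ii) (liftL I0 Lsub Ii) (Subgraph.toGraph Sfi)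
      (μi I0 Lsub Ii S0 μ0 Sfi hleftN hleftA))
    (Push I0 Lsub S0 μ0) where
  fN := medN I0 Lsub Ii S0 Sfi
  fA := medA I0 Lsub Ii S0 Sfi
  src_comm := fun a => by
    match a with
    | Sum.inl e => rfl
    | Sum.inr a =>
      exact (med_mapN I0 Lsub Ii S0 μ0 Sfi hleftN hleftA
        ((Subgraph.toGraph Ii).src a.1)).symm
  tgt_comm := fun a => by
    match a with
    | Sum.inl e => rfl
    | Sum.inr a =>
      exact (med_mapN I0 Lsub Ii S0 μ0 Sfi hleftN hleftA
        ((Subgraph.toGraph Ii).tgt a.1)).symm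

theorem med_unique (m : GraphHom
      (Push (Subgraph.toGraph Ii) (liftL I0 Lsub Ii) (Subgraph.toGraph Sfi)
        (μi I0 Lsub Ii S0 μ0 Sfi hleftN hleftA))
      (Push I0 Lsub S0 μ0))
    (h1 : ∀ s : (Subgraph.toGraph Sfi).N,
      m.fN ((pushInl _ _ _ (μi I0 Lsub Ii S0 μ0 Sfi hleftN hleftA)).fN s) =
        (pushInl I0 Lsub S0 μ0).fN s.1)
    (h2 : ∀ s : (Subgraph.toGraph Sfi).A,
      m.fA ((pushInl _ _ _ (μi I0 Lsub Ii S0 μ0 Sfi hleftN hleftA)).fA s) =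
        (pushInl I0 Lsub S0 μ0).fA s.1)
    (h3 : ∀ x : (Subgraph.toGraph Ii).N,
      m.fN ((pushMap _ _ _ (μi I0 Lsub Ii S0 μ0 Sfi hleftN hleftA)).fN x) =
        (pushMap I0 Lsub S0 μ0).fN x.1)
    (h4 : ∀ x : (Subgraph.toGraph Ii).A,
      m.fA ((pushMap _ _ _ (μi I0 Lsub Ii S0 μ0 Sfi hleftN hleftA)).fA x) =
        (pushMap I0 Lsub S0 μ0).fA x.1) :
    m.fN = medN I0 Lsub Ii S0 Sfi ∧ m.fA = medA I0 Lsub Ii S0 Sfi := by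
  constructor
  · funext d
    match d with
    | Sum.inl s => exact h1 s
    | Sum.inr x =>
      have e1 : (pushMap _ _ _ (μi I0 Lsub Ii S0 μ0 Sfi hleftN hleftA)).fN x.1 =
          Sum.inr ⟨x.1, x.2⟩ := dif_neg x.2
      have e2 : (pushMap I0 Lsub S0 μ0).fN x.1.1 = Sum.inr ⟨x.1.1, x.2⟩ := dif_neg x.2
      have := h3 x.1
      rw [e1, e2] at this
      exact this
  · funext d
    match d with
    | Sum.inl s => exact h2 s
    | Sum.inr a =>
      have e1 : (pushMap _ _ _ (μi I0 Lsub Ii S0 μ0 Sfi hleftN hleftA)).fA a.1 =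
          Sum.inr ⟨a.1, a.2⟩ := dif_neg a.2
      have e2 : (pushMap I0 Lsub S0 μ0).fA a.1.1 = Sum.inr ⟨a.1.1, a.2⟩ := dif_neg a.2
      have := h4 a.1
      rw [e1, e2] at this
      exact this

/-- In the commutative cube whose top and bottom squares are the
pushouts `D_0 = S_0 + (I_0 ∖ L_0)` and `D_{f(i)} = S_{f(i)} + (I_i ∖ L_i)` and
whose back and left squares are pullbacks, the unique mediating morphism
`D_{f(i)} → D_0` induced by the universal property of the bottom pushout makes
the front and right squares pullbacks, and it is itself an inclusion, namely
the sum of the inclusions `S_{f(i)} ↪ S_0` and `(I_i ∖ L_i) ↪ (I_0 ∖ L_0)`. -/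
theorem mediating_morphism_cube :
    (∃! m : GraphHom
        (Push (Subgraph.toGraph Ii) (liftL I0 Lsub Ii) (Subgraph.toGraph Sfi)
          (μi I0 Lsub Ii S0 μ0 Sfi hleftN hleftA))
        (Push I0 Lsub S0 μ0),
      (∀ s : (Subgraph.toGraph Sfi).N,
        m.fN ((pushInl _ _ _ (μi I0 Lsub Ii S0 μ0 Sfi hleftN hleftA)).fN s) =
          (pushInl I0 Lsub S0 μ0).fN s.1) ∧
      (∀ s : (Subgraph.toGraph Sfi).A,
        m.fA ((pushInl _ _ _ (μi I0 Lsub Ii S0 μ0 Sfi hleftN hleftA)).fA s) =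
          (pushInl I0 Lsub S0 μ0).fA s.1) ∧
      (∀ x : (Subgraph.toGraph Ii).N,
        m.fN ((pushMap _ _ _ (μi I0 Lsub Ii S0 μ0 Sfi hleftN hleftA)).fN x) =
          (pushMap I0 Lsub S0 μ0).fN x.1) ∧
      (∀ x : (Subgraph.toGraph Ii).A,
        m.fA ((pushMap _ _ _ (μi I0 Lsub Ii S0 μ0 Sfi hleftN hleftA)).fA x) =
          (pushMap I0 Lsub S0 μ0).fA x.1)) ∧
    (∀ m : GraphHom
        (Push (Subgraph.toGraph Ii) (liftL I0 Lsub Ii) (Subgraph.toGraph Sfi)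
          (μi I0 Lsub Ii S0 μ0 Sfi hleftN hleftA))
        (Push I0 Lsub S0 μ0),
      ((∀ s : (Subgraph.toGraph Sfi).N,
        m.fN ((pushInl _ _ _ (μi I0 Lsub Ii S0 μ0 Sfi hleftN hleftA)).fN s) =
          (pushInl I0 Lsub S0 μ0).fN s.1) ∧
      (∀ s : (Subgraph.toGraph Sfi).A,
        m.fA ((pushInl _ _ _ (μi I0 Lsub Ii S0 μ0 Sfi hleftN hleftA)).fA s) =
          (pushInl I0 Lsub S0 μ0).fA s.1) ∧
      (∀ x : (Subgraph.toGraph Ii).N,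
        m.fN ((pushMap _ _ _ (μi I0 Lsub Ii S0 μ0 Sfi hleftN hleftA)).fN x) =
          (pushMap I0 Lsub S0 μ0).fN x.1) ∧
      (∀ x : (Subgraph.toGraph Ii).A,
        m.fA ((pushMap _ _ _ (μi I0 Lsub Ii S0 μ0 Sfi hleftN hleftA)).fA x) =
          (pushMap I0 Lsub S0 μ0).fA x.1)) →
      -- the mediating morphism is a sum of inclusions, in particular injective
      (Function.Injective m.fN ∧ Function.Injective m.fA ∧
       (∀ (x : (Subgraph.toGraph Ii).N) (hx : x ∉ (liftL I0 Lsub Ii).nodes),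
         m.fN (Sum.inr ⟨x, hx⟩) = Sum.inr ⟨x.1, hx⟩) ∧
       (∀ (a : (Subgraph.toGraph Ii).A) (ha : a ∉ (liftL I0 Lsub Ii).arrows),
         m.fA (Sum.inr ⟨a, ha⟩) = Sum.inr ⟨a.1, ha⟩) ∧
       -- the front square is a pullback
       (∀ (s : S0.N) d, m.fN d = (pushInl I0 Lsub S0 μ0).fN s →
         ∃ h : s ∈ Sfi.nodes,
           d = (pushInl _ _ _ (μi I0 Lsub Ii S0 μ0 Sfi hleftN hleftA)).fN ⟨s, h⟩) ∧
       (∀ (s : S0.A) d, m.fA d = (pushInl I0 Lsub S0 μ0).fA s →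
         ∃ h : s ∈ Sfi.arrows,
           d = (pushInl _ _ _ (μi I0 Lsub Ii S0 μ0 Sfi hleftN hleftA)).fA ⟨s, h⟩) ∧
       -- the right square is a pullback
       (∀ (x : I0.N) d, m.fN d = (pushMap I0 Lsub S0 μ0).fN x →
         ∃ h : x ∈ Ii.nodes,
           d = (pushMap _ _ _ (μi I0 Lsub Ii S0 μ0 Sfi hleftN hleftA)).fN ⟨x, h⟩) ∧
       (∀ (x : I0.A) d, m.fA d = (pushMap I0 Lsub S0 μ0).fA x →
         ∃ h : x ∈ Ii.arrows,
           d = (pushMap _ _ _ (μi I0 Lsub Ii S0 μ0 Sfi hleftN hleftA)).fA ⟨x, h⟩))) := by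
  constructor
  · refine ⟨medHom I0 Lsub Ii S0 μ0 Sfi hleftN hleftA,
      ⟨fun s => rfl, fun s => rfl,
       fun x => med_mapN I0 Lsub Ii S0 μ0 Sfi hleftN hleftA x,
       fun a => med_mapA I0 Lsub Ii S0 μ0 Sfi hleftN hleftA a⟩, ?_⟩
    rintro m ⟨h1, h2, h3, h4⟩
    obtain ⟨hN, hA⟩ := med_unique I0 Lsub Ii S0 μ0 Sfi hleftN hleftA m h1 h2 h3 h4
    exact GraphHom.ext' hN hA
  · rintro m ⟨h1, h2, h3, h4⟩
    obtain ⟨hN, hA⟩ := med_unique I0 Lsub Ii S0 μ0 Sfi hleftN hleftA m h1 h2 h3 h4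
    rw [hN, hA]
    refine ⟨?_, ?_, fun x hx => rfl, fun a ha => rfl, ?_, ?_, ?_, ?_⟩
    · intro a b h
      match a, b with
      | Sum.inl s, Sum.inl t =>
        injection h with h
        exact congrArg Sum.inl (Subtype.ext h)
      | Sum.inl s, Sum.inr y => injection h
      | Sum.inr x, Sum.inl t => injection h
      | Sum.inr x, Sum.inr y =>
        injection h with h
        have hv : x.1.1 = y.1.1 :=
          congrArg (fun z : {v : I0.N // v ∉ Lsub.nodes} => z.1) h
        exact congrArg Sum.inr (Subtype.ext (Subtype.ext hv))
    · intro a b h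
      match a, b with
      | Sum.inl s, Sum.inl t =>
        injection h with h
        exact congrArg Sum.inl (Subtype.ext h)
      | Sum.inl s, Sum.inr y => injection h
      | Sum.inr x, Sum.inl t => injection h
      | Sum.inr x, Sum.inr y =>
        injection h with h
        have hv : x.1.1 = y.1.1 :=
          congrArg (fun z : {v : I0.A // v ∉ Lsub.arrows} => z.1) h
        exact congrArg Sum.inr (Subtype.ext (Subtype.ext hv))
    · intro s d hd
      match d with
      | Sum.inl t =>
        injection hd with ht
        exact ⟨ht ▸ t.2, by cases ht; rfl⟩
      | Sum.inr x => injection hd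
    · intro s d hd
      match d with
      | Sum.inl t =>
        injection hd with ht
        exact ⟨ht ▸ t.2, by cases ht; rfl⟩
      | Sum.inr x => injection hd
    · intro x d hd
      by_cases hL : x ∈ Lsub.nodes
      · rw [show (pushMap I0 Lsub S0 μ0).fN x = Sum.inl (μ0.fN ⟨x, hL⟩) from dif_pos hL] at hd
        match d, hd with
        | Sum.inl t, hd =>
          injection hd with ht
          have hIi : x ∈ Ii.nodes := (hleftN x hL).mpr (ht ▸ t.2)
          refine ⟨hIi, ?_⟩
          rw [show (pushMap _ _ _ (μi I0 Lsub Ii S0 μ0 Sfi hleftN hleftA)).fN ⟨x, hIi⟩ =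
            Sum.inl ((μi I0 Lsub Ii S0 μ0 Sfi hleftN hleftA).fN ⟨⟨x, hIi⟩, hL⟩) from dif_pos hL]
          exact congrArg Sum.inl (Subtype.ext ht)
        | Sum.inr y, hd => injection hd
      · rw [show (pushMap I0 Lsub S0 μ0).fN x = Sum.inr ⟨x, hL⟩ from dif_neg hL] at hd
        match d, hd with
        | Sum.inl t, hd => injection hd
        | Sum.inr y, hd =>
          injection hd with hd'
          have hy : y.1.1 = x := congrArg Subtype.val hd'
          have hIi : x ∈ Ii.nodes := hy ▸ y.1.2
          refine ⟨hIi, ?_⟩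
          have hL' : (⟨x, hIi⟩ : (Subgraph.toGraph Ii).N) ∉ (liftL I0 Lsub Ii).nodes := hL
          rw [show (pushMap _ _ _ (μi I0 Lsub Ii S0 μ0 Sfi hleftN hleftA)).fN ⟨x, hIi⟩ =
            Sum.inr ⟨⟨x, hIi⟩, hL'⟩ from dif_neg hL']
          exact congrArg Sum.inr (Subtype.ext (Subtype.ext hy))
    · intro x d hd
      by_cases hL : x ∈ Lsub.arrows
      · rw [show (pushMap I0 Lsub S0 μ0).fA x = Sum.inl (μ0.fA ⟨x, hL⟩) from dif_pos hL] at hd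
        match d, hd with
        | Sum.inl t, hd =>
          injection hd with ht
          have hIi : x ∈ Ii.arrows := (hleftA x hL).mpr (ht ▸ t.2)
          refine ⟨hIi, ?_⟩
          rw [show (pushMap _ _ _ (μi I0 Lsub Ii S0 μ0 Sfi hleftN hleftA)).fA ⟨x, hIi⟩ =
            Sum.inl ((μi I0 Lsub Ii S0 μ0 Sfi hleftN hleftA).fA ⟨⟨x, hIi⟩, hL⟩) from dif_pos hL]
          exact congrArg Sum.inl (Subtype.ext ht)
        | Sum.inr y, hd => injection hd
      · rw [show (pushMap I0 Lsub S0 μ0).fA x = Sum.inr ⟨x, hL⟩ from dif_neg hL] at hd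
        match d, hd with
        | Sum.inl t, hd => injection hd
        | Sum.inr y, hd =>
          injection hd with hd'
          have hy : y.1.1 = x := congrArg Subtype.val hd'
          have hIi : x ∈ Ii.arrows := hy ▸ y.1.2
          refine ⟨hIi, ?_⟩
          have hL' : (⟨x, hIi⟩ : (Subgraph.toGraph Ii).A) ∉ (liftL I0 Lsub Ii).arrows := hL
          rw [show (pushMap _ _ _ (μi I0 Lsub Ii S0 μ0 Sfi hleftN hleftA)).fA ⟨x, hIi⟩ =
            Sum.inr ⟨⟨x, hIi⟩, hL'⟩ from dif_neg hL']
          exact congrArg Sum.inr (Subtype.ext (Subtype.ext hy))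

end Cube
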